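/- Let N be a natural number. The class of all finite digraphs D admitting a partition D = D_e ∪ D_c ∪ D_f where the induced digraph on D_e is empty (no edges between distinct vertices), the induced digraph on D_c is complete and reflexive, |D_f| ≤ N, and the connections between D_e and D_c are uniform (for all x,y ∈ D_e and z,t ∈ D_c: x→z iff y→t, and z→x iff t→y), is well quasi-ordered under the surjective homomorphism ordering. -/

import Mathlib

/-- A finite structure with a single binary relation (digraph/graph model). -/
structure FinBinRel where
  n : ℕ
  rel : Fin n → Fin n → Prop

/-- `f` is a homomorphism from `A` to `B`: it maps related pairs to related pairs. -/
def IsHom (A B : FinBinRel) (f : Fin A.n → Fin B.n) : Prop :=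
  ∀ x y, A.rel x y → B.rel (f x) (f y)

/-- `f` is a strong homomorphism: a homomorphism such that every related pair of
elements of the image is the image of a related pair. -/
def IsStrongHom (A B : FinBinRel) (f : Fin A.n → Fin B.n) : Prop :=
  IsHom A B f ∧
    ∀ p q : Fin B.n, B.rel p q → (∃ a, f a = p) → (∃ b, f b = q) →
      ∃ u v, A.rel u v ∧ f u = p ∧ f v = q

/-- Homomorphic image ordering: `A ⪯ B` iff there is a surjective homomorphism `B → A`. -/
def HomLe (A B : FinBinRel) : Prop :=
  ∃ f : Fin B.n → Fin A.n, Function.Surjective f ∧ IsHom B A f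

/-- Strong homomorphic image ordering: `A ⪯ B` iff there is a surjective strong
homomorphism `B → A`. -/
def StrongLe (A B : FinBinRel) : Prop :=
  ∃ f : Fin B.n → Fin A.n, Function.Surjective f ∧ IsStrongHom B A f

/-- Isomorphism of binary relational structures. -/
def BinIso (A B : FinBinRel) : Prop :=
  ∃ e : Fin A.n ≃ Fin B.n, ∀ x y, A.rel x y ↔ B.rel (e x) (e y)

/-- A class `C` is well quasi-ordered by `r`: every infinite sequence of members of `C`
contains a "good pair". (For orderings on finite structures respecting size this is
equivalent to having no infinite antichain.) -/
def IsWqo (r : FinBinRel → FinBinRel → Prop) (C : Set FinBinRel) : Prop :=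
  ∀ f : ℕ → FinBinRel, (∀ i, f i ∈ C) → ∃ i j, i < j ∧ r (f i) (f j)

/-- A reflexive graph: symmetric relation with a loop at every vertex. -/
def ReflGraph (A : FinBinRel) : Prop :=
  (∀ x, A.rel x x) ∧ (∀ x y, A.rel x y → A.rel y x)

/-- An irreflexive graph: symmetric and loopless. -/
def IrrGraph (A : FinBinRel) : Prop :=
  (∀ x, ¬ A.rel x x) ∧ (∀ x y, A.rel x y → A.rel y x)

/-- The irreflexive complete graph on `n` vertices. -/
def Kirr (n : ℕ) : FinBinRel := ⟨n, fun i j => i ≠ j⟩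

/-- The complete reflexive graph/digraph on `n` vertices (all pairs, including loops). -/
def Kcompl (n : ℕ) : FinBinRel := ⟨n, fun _ _ => True⟩

/-- The subcomplete reflexive graph `N_{n,k}` (for `2k ≤ n`): the complete reflexive
graph on `n` vertices with the `k` disjoint edges `{0,1},{2,3},…,{2k-2,2k-1}` deleted. -/
def Ngraph (n k : ℕ) : FinBinRel :=
  ⟨n, fun i j => ¬ ∃ m, m < k ∧
      ((i.val = 2 * m ∧ j.val = 2 * m + 1) ∨ (j.val = 2 * m ∧ i.val = 2 * m + 1))⟩

/-- The subcomplete digraph `N⃗_{n,k}` (for `2k ≤ n`): the complete reflexive digraph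
on `n` vertices with the `k` disjoint directed edges `(0,1),(2,3),…,(2k-2,2k-1)` removed. -/
def Ndigraph (n k : ℕ) : FinBinRel :=
  ⟨n, fun i j => ¬ ∃ m, m < k ∧ i.val = 2 * m ∧ j.val = 2 * m + 1⟩

/-- `D` has a set of `k` pairwise disjoint edges (all `2k` endpoints distinct). -/
def HasDisjointEdges (D : FinBinRel) (k : ℕ) : Prop :=
  ∃ a b : Fin k → Fin D.n,
    Function.Injective (Sum.elim a b) ∧ ∀ i, D.rel (a i) (b i)

/-- Membership in the class `𝒯_N` of Theorem 2.1: `D` splits into an empty part, a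
complete reflexive part, a part of size at most `N`, with uniform connections between
the empty and complete parts. -/
def InClassT (N : ℕ) (D : FinBinRel) : Prop :=
  ∃ De Dc Df : Set (Fin D.n),
    (∀ x, x ∈ De ∨ x ∈ Dc ∨ x ∈ Df) ∧
    Disjoint De Dc ∧ Disjoint De Df ∧ Disjoint Dc Df ∧
    (∀ x ∈ De, ∀ y ∈ De, x ≠ y → ¬ D.rel x y) ∧
    (∀ x ∈ Dc, ∀ y ∈ Dc, D.rel x y) ∧
    Df.ncard ≤ N ∧
    (∀ x ∈ De, ∀ y ∈ De, ∀ z ∈ Dc, ∀ t ∈ Dc,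
      (D.rel x z ↔ D.rel y t) ∧ (D.rel z x ↔ D.rel t y))

/-! ### Auxiliary material for the proof of `stmt_3` -/

namespace Stmt3Aux

open Classical

/-- The type of "types" of vertices in the empty part: connections to the finite part
(in both directions, padded to length `N`) together with a loop bit. -/
abbrev TE (N : ℕ) : Type := (Fin N → Bool) × (Fin N → Bool) × Bool

/-- The type of "types" of vertices in the complete part. -/
abbrev TC (N : ℕ) : Type := (Fin N → Bool) × (Fin N → Bool)

noncomputable def tod (D : FinBinRel) (N m : ℕ) (e : Fin m → Fin D.n) (x : Fin D.n) :
    Fin N → Bool :=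
  fun k => if h : (k : ℕ) < m then decide (D.rel x (e ⟨k, h⟩)) else false

noncomputable def tfrom (D : FinBinRel) (N m : ℕ) (e : Fin m → Fin D.n) (x : Fin D.n) :
    Fin N → Bool :=
  fun k => if h : (k : ℕ) < m then decide (D.rel (e ⟨k, h⟩) x) else false

noncomputable def tE (D : FinBinRel) (N m : ℕ) (e : Fin m → Fin D.n) (x : Fin D.n) : TE N :=
  (tod D N m e x, tfrom D N m e x, decide (D.rel x x))

noncomputable def tC (D : FinBinRel) (N m : ℕ) (e : Fin m → Fin D.n) (x : Fin D.n) : TC N :=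
  (tod D N m e x, tfrom D N m e x)

noncomputable def AE (D : FinBinRel) (N m : ℕ) (e : Fin m → Fin D.n) (De : Set (Fin D.n))
    (t : TE N) : Set (Fin D.n) := {x | x ∈ De ∧ tE D N m e x = t}

noncomputable def AC (D : FinBinRel) (N m : ℕ) (e : Fin m → Fin D.n) (Dc : Set (Fin D.n))
    (t : TC N) : Set (Fin D.n) := {x | x ∈ Dc ∧ tC D N m e x = t}

noncomputable def Rb (D : FinBinRel) (N m : ℕ) (e : Fin m → Fin D.n) :
    Fin N → Fin N → Bool :=
  fun j k => if hj : (j : ℕ) < m then if hk : (k : ℕ) < m then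
      decide (D.rel (e ⟨j, hj⟩) (e ⟨k, hk⟩)) else false else false

/-- Every finite set can be enumerated by `Fin (ncard)`. -/
lemma exists_enum {n : ℕ} (S : Set (Fin n)) :
    ∃ e : Fin S.ncard → Fin n, Function.Injective e ∧ ∀ v, v ∈ S ↔ ∃ k, e k = v := by
  haveI : Fintype S := Fintype.ofFinite S
  have hcard : Fintype.card S = S.ncard := by
    rw [← Nat.card_eq_fintype_card, Nat.card_coe_set_eq]
  let q := Fintype.equivFinOfCardEq hcard
  refine ⟨fun k => (q.symm k : Fin n), ?_, ?_⟩
  · intro a b hab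
    exact q.symm.injective (Subtype.coe_injective hab)
  · intro v
    constructor
    · intro hv
      exact ⟨q ⟨v, hv⟩, by simp⟩
    · rintro ⟨k, rfl⟩
      exact (q.symm k).2

/-- A surjection onto a finite set from a finite set of larger cardinality (with an
emptiness side condition). -/
lemma exists_surj {α β : Type} [Finite α] [Finite β] (A : Set α) (B : Set β)
    (hle : A.ncard ≤ B.ncard) (h0 : A = ∅ → B = ∅) :
    ∃ σ : B → A, ∀ a : A, ∃ b, σ b = a := by
  rcases A.eq_empty_or_nonempty with hA | hA
  · have hB := h0 hA
    haveI : IsEmpty ↥A := by rw [hA]; exact Set.isEmpty_coe_sort.mpr rfl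
    haveI : IsEmpty ↥B := by rw [hB]; exact Set.isEmpty_coe_sort.mpr rfl
    exact ⟨fun b => isEmptyElim b, fun a => isEmptyElim a⟩
  · haveI : Nonempty A := hA.to_subtype
    haveI : Fintype A := Fintype.ofFinite A
    haveI : Fintype B := Fintype.ofFinite B
    have hc : Fintype.card A ≤ Fintype.card B := by
      rwa [← Nat.card_eq_fintype_card, ← Nat.card_eq_fintype_card,
        Nat.card_coe_set_eq, Nat.card_coe_set_eq]
    obtain ⟨i⟩ := Function.Embedding.nonempty_of_card_le hc
    exact ⟨Function.invFun i, fun a => ⟨i a, Function.leftInverse_invFun i.injective a⟩⟩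

/-- Every sequence of naturals has a monotone subsequence. -/
lemma mono_subseq (f : ℕ → ℕ) : ∃ g : ℕ → ℕ, StrictMono g ∧ Monotone (f ∘ g) := by
  have hpwo : (Set.univ : Set ℕ).IsPWO := (Set.isWF_univ_iff.2 inferInstance).isPWO
  obtain ⟨g, hg⟩ := hpwo.exists_monotone_subseq (f := f) fun n => Set.mem_univ _
  exact ⟨g, g.strictMono, hg⟩

/-- Dickson's lemma, subsequence form, for `Fin k`-indexed tuples. -/
lemma dickson_fin (k : ℕ) : ∀ f : ℕ → Fin k → ℕ,
    ∃ g : ℕ → ℕ, StrictMono g ∧ ∀ t, Monotone fun n => f (g n) t := by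
  induction k with
  | zero => exact fun f => ⟨id, strictMono_id, fun t => t.elim0⟩
  | succ k ih =>
    intro f
    obtain ⟨g1, hg1, hmono⟩ := ih fun n t => f n t.castSucc
    obtain ⟨g2, hg2, hmono2⟩ := mono_subseq fun n => f (g1 n) (Fin.last k)
    refine ⟨g1 ∘ g2, hg1.comp hg2, fun t => ?_⟩
    induction t using Fin.lastCases with
    | last => exact hmono2
    | cast i => exact (hmono i).comp hg2.monotone

/-- Dickson's lemma for tuples indexed by a finite type. -/
lemma dickson {T : Type} [Finite T] (f : ℕ → T → ℕ) :
    ∃ g : ℕ → ℕ, StrictMono g ∧ ∀ t, Monotone fun n => f (g n) t := by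
  haveI : Fintype T := Fintype.ofFinite T
  obtain ⟨g, hg, hm⟩ := dickson_fin (Fintype.card T) fun n i => f n ((Fintype.equivFin T).symm i)
  refine ⟨g, hg, fun t => ?_⟩
  have := hm (Fintype.equivFin T t)
  simpa using this

/-- Pigeonhole: a sequence in a finite type repeats a value at two indices `i < j`. -/
lemma exists_eq_pair {F : Type} [Finite F] (c : ℕ → F) : ∃ i j, i < j ∧ c i = c j := by
  obtain ⟨v, hv⟩ := Finite.exists_infinite_fiber c
  have hs : (c ⁻¹' {v}).Infinite := Set.infinite_coe_iff.mp hv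
  obtain ⟨i, hi⟩ := hs.nonempty
  obtain ⟨j, hj, hij⟩ := hs.exists_gt i
  exact ⟨i, j, hij, (Set.mem_singleton_iff.mp hi).trans (Set.mem_singleton_iff.mp hj).symm⟩

/-- The combination lemma: if two members of the class have the same finite code and the
counts of vertex types of the first are dominated by those of the second, then the first
is a surjective homomorphic image of the second. -/
lemma key (N : ℕ) (D₁ D₂ : FinBinRel)
    (De₁ Dc₁ Df₁ : Set (Fin D₁.n)) (De₂ Dc₂ Df₂ : Set (Fin D₂.n))
    (cover₁ : ∀ x, x ∈ De₁ ∨ x ∈ Dc₁ ∨ x ∈ Df₁)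
    (compl₁ : ∀ x ∈ Dc₁, ∀ y ∈ Dc₁, D₁.rel x y)
    (unif₁ : ∀ x ∈ De₁, ∀ y ∈ De₁, ∀ z ∈ Dc₁, ∀ t ∈ Dc₁,
      (D₁.rel x z ↔ D₁.rel y t) ∧ (D₁.rel z x ↔ D₁.rel t y))
    (cover₂ : ∀ x, x ∈ De₂ ∨ x ∈ Dc₂ ∨ x ∈ Df₂)
    (dEC₂ : Disjoint De₂ Dc₂) (dEF₂ : Disjoint De₂ Df₂) (dCF₂ : Disjoint Dc₂ Df₂)
    (empty₂ : ∀ x ∈ De₂, ∀ y ∈ De₂, x ≠ y → ¬ D₂.rel x y)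
    (m₁ m₂ : ℕ) (hm : m₁ = m₂) (hmN : m₁ ≤ N)
    (e₁ : Fin m₁ → Fin D₁.n) (e₂ : Fin m₂ → Fin D₂.n)
    (he₁ : ∀ v, v ∈ Df₁ ↔ ∃ k, e₁ k = v)
    (he₂ : ∀ v, v ∈ Df₂ ↔ ∃ k, e₂ k = v) (hi₂ : Function.Injective e₂)
    (hRb : Rb D₁ N m₁ e₁ = Rb D₂ N m₂ e₂)
    (hEC : (∃ x ∈ De₂, ∃ z ∈ Dc₂, D₂.rel x z) → ∃ x ∈ De₁, ∃ z ∈ Dc₁, D₁.rel x z)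
    (hCE : (∃ x ∈ De₂, ∃ z ∈ Dc₂, D₂.rel z x) → ∃ x ∈ De₁, ∃ z ∈ Dc₁, D₁.rel z x)
    (hsE : ∀ t, AE D₁ N m₁ e₁ De₁ t = ∅ → AE D₂ N m₂ e₂ De₂ t = ∅)
    (hsC : ∀ t, AC D₁ N m₁ e₁ Dc₁ t = ∅ → AC D₂ N m₂ e₂ Dc₂ t = ∅)
    (hnE : ∀ t, (AE D₁ N m₁ e₁ De₁ t).ncard ≤ (AE D₂ N m₂ e₂ De₂ t).ncard)
    (hnC : ∀ t, (AC D₁ N m₁ e₁ Dc₁ t).ncard ≤ (AC D₂ N m₂ e₂ Dc₂ t).ncard) :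
    HomLe D₁ D₂ := by
  subst hm
  classical
  -- evaluation lemmas for the codes
  have bitTo : ∀ (D : FinBinRel) (e : Fin m₁ → Fin D.n) (x : Fin D.n) (k : Fin m₁),
      tod D N m₁ e x ⟨(k : ℕ), lt_of_lt_of_le k.isLt hmN⟩ = decide (D.rel x (e k)) :=
    fun D e x k => dif_pos k.isLt
  have bitFrom : ∀ (D : FinBinRel) (e : Fin m₁ → Fin D.n) (x : Fin D.n) (k : Fin m₁),
      tfrom D N m₁ e x ⟨(k : ℕ), lt_of_lt_of_le k.isLt hmN⟩ = decide (D.rel (e k) x) :=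
    fun D e x k => dif_pos k.isLt
  have Rb_eval : ∀ (D : FinBinRel) (e : Fin m₁ → Fin D.n) (j k : Fin m₁),
      Rb D N m₁ e ⟨(j : ℕ), lt_of_lt_of_le j.isLt hmN⟩ ⟨(k : ℕ), lt_of_lt_of_le k.isLt hmN⟩
        = decide (D.rel (e j) (e k)) :=
    fun D e j k => (dif_pos j.isLt).trans (dif_pos k.isLt)
  have hR : ∀ j k : Fin m₁, D₂.rel (e₂ j) (e₂ k) → D₁.rel (e₁ j) (e₁ k) := by
    intro j k hrel
    have h := congrFun (congrFun hRb ⟨(j : ℕ), lt_of_lt_of_le j.isLt hmN⟩)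
      ⟨(k : ℕ), lt_of_lt_of_le k.isLt hmN⟩
    rw [Rb_eval D₁ e₁ j k, Rb_eval D₂ e₂ j k] at h
    exact of_decide_eq_true (h.trans (decide_eq_true hrel))
  have relTo : ∀ (x₁ : Fin D₁.n) (x₂ : Fin D₂.n), tod D₁ N m₁ e₁ x₁ = tod D₂ N m₁ e₂ x₂ →
      ∀ k : Fin m₁, D₂.rel x₂ (e₂ k) → D₁.rel x₁ (e₁ k) := by
    intro x₁ x₂ h k hrel
    have h' := congrFun h ⟨(k : ℕ), lt_of_lt_of_le k.isLt hmN⟩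
    rw [bitTo D₁ e₁ x₁ k, bitTo D₂ e₂ x₂ k] at h'
    exact of_decide_eq_true (h'.trans (decide_eq_true hrel))
  have relFrom : ∀ (x₁ : Fin D₁.n) (x₂ : Fin D₂.n),
      tfrom D₁ N m₁ e₁ x₁ = tfrom D₂ N m₁ e₂ x₂ →
      ∀ k : Fin m₁, D₂.rel (e₂ k) x₂ → D₁.rel (e₁ k) x₁ := by
    intro x₁ x₂ h k hrel
    have h' := congrFun h ⟨(k : ℕ), lt_of_lt_of_le k.isLt hmN⟩
    rw [bitFrom D₁ e₁ x₁ k, bitFrom D₂ e₂ x₂ k] at h'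
    exact of_decide_eq_true (h'.trans (decide_eq_true hrel))
  -- choose the surjections between type classes
  choose σE hσE using fun t : TE N => exists_surj _ _ (hnE t) (hsE t)
  choose σC hσC using fun t : TC N => exists_surj _ _ (hnC t) (hsC t)
  -- the homomorphism
  set F : Fin D₂.n → Fin D₁.n := fun v =>
    if hv : ∃ k, e₂ k = v then e₁ (Classical.choose hv)
    else if hv' : v ∈ De₂ then
      (σE (tE D₂ N m₁ e₂ v) ⟨v, hv', rfl⟩ : Fin D₁.n)
    else
      (σC (tC D₂ N m₁ e₂ v) ⟨v, ((cover₂ v).resolve_left hv').resolve_right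
        (fun hDf => hv ((he₂ v).mp hDf)), rfl⟩ : Fin D₁.n)
    with hFdef
  have hL1 : ∀ k, F (e₂ k) = e₁ k := by
    intro k
    have hk : ∃ k', e₂ k' = e₂ k := ⟨k, rfl⟩
    have h1 : F (e₂ k) = e₁ (Classical.choose hk) := by
      simp only [hFdef]
      rw [dif_pos hk]
    rw [h1, hi₂ (Classical.choose_spec hk)]
  have hL2 : ∀ v (hnv : ¬ ∃ k, e₂ k = v) (hv : v ∈ De₂),
      F v = (σE (tE D₂ N m₁ e₂ v) ⟨v, hv, rfl⟩ : Fin D₁.n) := by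
    intro v hnv hv
    simp only [hFdef]
    rw [dif_neg hnv, dif_pos hv]
  have hL2' : ∀ v, (¬ ∃ k, e₂ k = v) → ∀ _ : v ∈ De₂,
      F v ∈ De₁ ∧ tE D₁ N m₁ e₁ (F v) = tE D₂ N m₁ e₂ v := by
    intro v hnv hv
    rw [hL2 v hnv hv]
    exact (σE (tE D₂ N m₁ e₂ v) ⟨v, hv, rfl⟩).2
  have hL3 : ∀ v (hnv : ¬ ∃ k, e₂ k = v) (hv : v ∈ Dc₂),
      F v = (σC (tC D₂ N m₁ e₂ v) ⟨v, hv, rfl⟩ : Fin D₁.n) := by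
    intro v hnv hv
    have hnd : v ∉ De₂ := fun h => Set.disjoint_left.mp dEC₂ h hv
    simp only [hFdef]
    rw [dif_neg hnv, dif_neg hnd]
  have hL3' : ∀ v, (¬ ∃ k, e₂ k = v) → ∀ _ : v ∈ Dc₂,
      F v ∈ Dc₁ ∧ tC D₁ N m₁ e₁ (F v) = tC D₂ N m₁ e₂ v := by
    intro v hnv hv
    rw [hL3 v hnv hv]
    exact (σC (tC D₂ N m₁ e₂ v) ⟨v, hv, rfl⟩).2
  refine ⟨F, ?_, ?_⟩
  · -- surjectivity
    intro u
    rcases cover₁ u with hu | hu | hu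
    · obtain ⟨b, hb⟩ := hσE (tE D₁ N m₁ e₁ u) ⟨u, hu, rfl⟩
      obtain ⟨v, hv, htv⟩ := b
      have hnv : ¬ ∃ k, e₂ k = v := fun hk =>
        Set.disjoint_left.mp dEF₂ hv ((he₂ v).mpr hk)
      refine ⟨v, ?_⟩
      rw [hL2 v hnv hv]
      have htr : ∀ t (ht : tE D₂ N m₁ e₂ v = t),
          (σE (tE D₂ N m₁ e₂ v) ⟨v, hv, rfl⟩ : Fin D₁.n) = (σE t ⟨v, hv, ht⟩ : Fin D₁.n) := by
        rintro t rfl; rfl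
      rw [htr _ htv, hb]
    · obtain ⟨b, hb⟩ := hσC (tC D₁ N m₁ e₁ u) ⟨u, hu, rfl⟩
      obtain ⟨v, hv, htv⟩ := b
      have hnv : ¬ ∃ k, e₂ k = v := fun hk =>
        Set.disjoint_left.mp dCF₂ hv ((he₂ v).mpr hk)
      refine ⟨v, ?_⟩
      rw [hL3 v hnv hv]
      have htr : ∀ t (ht : tC D₂ N m₁ e₂ v = t),
          (σC (tC D₂ N m₁ e₂ v) ⟨v, hv, rfl⟩ : Fin D₁.n) = (σC t ⟨v, hv, ht⟩ : Fin D₁.n) := by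
        rintro t rfl; rfl
      rw [htr _ htv, hb]
    · obtain ⟨k, hk⟩ := (he₁ u).mp hu
      exact ⟨e₂ k, by rw [hL1 k, hk]⟩
  · -- homomorphism property
    intro x y hxy
    by_cases hx : ∃ k, e₂ k = x
    · obtain ⟨j, rfl⟩ := hx
      rw [hL1 j]
      by_cases hy : ∃ k, e₂ k = y
      · obtain ⟨k, rfl⟩ := hy
        rw [hL1 k]
        exact hR j k hxy
      · rcases cover₂ y with hyd | hyd | hyd
        · have h2 := hL2' y hy hyd
          have hfr : tfrom D₁ N m₁ e₁ (F y) = tfrom D₂ N m₁ e₂ y :=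
            congrArg (fun p => p.2.1) h2.2
          exact relFrom (F y) y hfr j hxy
        · have h3 := hL3' y hy hyd
          have hfr : tfrom D₁ N m₁ e₁ (F y) = tfrom D₂ N m₁ e₂ y :=
            congrArg (fun p => p.2) h3.2
          exact relFrom (F y) y hfr j hxy
        · exact absurd ((he₂ y).mp hyd) hy
    · rcases cover₂ x with hxd | hxd | hxd
      · -- x in the empty part
        have h2x := hL2' x hx hxd
        by_cases hy : ∃ k, e₂ k = y
        · obtain ⟨k, rfl⟩ := hy
          rw [hL1 k]
          have hto : tod D₁ N m₁ e₁ (F x) = tod D₂ N m₁ e₂ x :=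
            congrArg (fun p => p.1) h2x.2
          exact relTo (F x) x hto k hxy
        · rcases cover₂ y with hyd | hyd | hyd
          · by_cases heq : x = y
            · subst heq
              have hloop : decide (D₁.rel (F x) (F x)) = decide (D₂.rel x x) :=
                congrArg (fun p => p.2.2) h2x.2
              exact of_decide_eq_true (hloop.trans (decide_eq_true hxy))
            · exact absurd hxy (empty₂ x hxd y hyd heq)
          · have h3y := hL3' y hy hyd
            obtain ⟨x', hx', z', hz', hr⟩ := hEC ⟨x, hxd, y, hyd, hxy⟩
            exact ((unif₁ x' hx' (F x) h2x.1 z' hz' (F y) h3y.1).1).mp hr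
          · exact absurd ((he₂ y).mp hyd) hy
      · -- x in the complete part
        have h3x := hL3' x hx hxd
        by_cases hy : ∃ k, e₂ k = y
        · obtain ⟨k, rfl⟩ := hy
          rw [hL1 k]
          have hto : tod D₁ N m₁ e₁ (F x) = tod D₂ N m₁ e₂ x :=
            congrArg (fun p => p.1) h3x.2
          exact relTo (F x) x hto k hxy
        · rcases cover₂ y with hyd | hyd | hyd
          · have h2y := hL2' y hy hyd
            obtain ⟨x', hx', z', hz', hr⟩ := hCE ⟨y, hyd, x, hxd, hxy⟩
            exact ((unif₁ x' hx' (F y) h2y.1 z' hz' (F x) h3x.1).2).mp hr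
          · have h3y := hL3' y hy hyd
            exact compl₁ (F x) h3x.1 (F y) h3y.1
          · exact absurd ((he₂ y).mp hyd) hy
      · exact absurd ((he₂ x).mp hxd) hx

end Stmt3Aux

/-- The class `𝒯_N` is well quasi-ordered under the surjective homomorphism ordering. -/
theorem stmt_3 (N : ℕ) : IsWqo HomLe {D | InClassT N D} := by
  classical
  intro f hf
  simp only [Set.mem_setOf_eq, InClassT] at hf
  choose De Dc Df cover dEC dEF dCF hemp hcom hcard hunif using hf
  choose e hinj hrange using fun i => Stmt3Aux.exists_enum (Df i)
  -- Dickson: pass to a subsequence along which all type counts are monotone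
  obtain ⟨g, hgmono, hgc⟩ := Stmt3Aux.dickson
    (fun i : ℕ => Sum.elim
      (fun t : Stmt3Aux.TE N => (Stmt3Aux.AE (f i) N (Df i).ncard (e i) (De i) t).ncard)
      (fun t : Stmt3Aux.TC N => (Stmt3Aux.AC (f i) N (Df i).ncard (e i) (Dc i) t).ncard))
  -- pigeonhole on the finite part of the code
  obtain ⟨i', j', hij', hcode⟩ := Stmt3Aux.exists_eq_pair
    (fun n : ℕ =>
      ((⟨(Df (g n)).ncard, Nat.lt_succ_of_le (hcard (g n))⟩ : Fin (N + 1)),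
       Stmt3Aux.Rb (f (g n)) N (Df (g n)).ncard (e (g n)),
       decide (∃ x ∈ De (g n), ∃ z ∈ Dc (g n), (f (g n)).rel x z),
       decide (∃ x ∈ De (g n), ∃ z ∈ Dc (g n), (f (g n)).rel z x),
       (fun t : Stmt3Aux.TE N =>
         decide (Stmt3Aux.AE (f (g n)) N (Df (g n)).ncard (e (g n)) (De (g n)) t = ∅)),
       (fun t : Stmt3Aux.TC N =>
         decide (Stmt3Aux.AC (f (g n)) N (Df (g n)).ncard (e (g n)) (Dc (g n)) t = ∅))))
  set i := g i' with hi
  set j := g j' with hj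
  refine ⟨i, j, hgmono hij', ?_⟩
  have h1 : (Df i).ncard = (Df j).ncard :=
    congrArg (fun p => ((p.1 : Fin (N + 1)) : ℕ)) hcode
  have h2 : Stmt3Aux.Rb (f i) N (Df i).ncard (e i) = Stmt3Aux.Rb (f j) N (Df j).ncard (e j) :=
    congrArg (fun p => p.2.1) hcode
  have h3 : decide (∃ x ∈ De i, ∃ z ∈ Dc i, (f i).rel x z)
      = decide (∃ x ∈ De j, ∃ z ∈ Dc j, (f j).rel x z) :=
    congrArg (fun p => p.2.2.1) hcode
  have h4 : decide (∃ x ∈ De i, ∃ z ∈ Dc i, (f i).rel z x)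
      = decide (∃ x ∈ De j, ∃ z ∈ Dc j, (f j).rel z x) :=
    congrArg (fun p => p.2.2.2.1) hcode
  have h5 : (fun t : Stmt3Aux.TE N =>
        decide (Stmt3Aux.AE (f i) N (Df i).ncard (e i) (De i) t = ∅))
      = (fun t : Stmt3Aux.TE N =>
        decide (Stmt3Aux.AE (f j) N (Df j).ncard (e j) (De j) t = ∅)) :=
    congrArg (fun p => p.2.2.2.2.1) hcode
  have h6 : (fun t : Stmt3Aux.TC N =>
        decide (Stmt3Aux.AC (f i) N (Df i).ncard (e i) (Dc i) t = ∅))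
      = (fun t : Stmt3Aux.TC N =>
        decide (Stmt3Aux.AC (f j) N (Df j).ncard (e j) (Dc j) t = ∅)) :=
    congrArg (fun p => p.2.2.2.2.2) hcode
  refine Stmt3Aux.key N (f i) (f j) (De i) (Dc i) (Df i) (De j) (Dc j) (Df j)
    (cover i) (hcom i) (hunif i) (cover j) (dEC j) (dEF j) (dCF j) (hemp j)
    (Df i).ncard (Df j).ncard h1 (hcard i) (e i) (e j) (hrange i) (hrange j) (hinj j)
    h2 ?_ ?_ ?_ ?_ ?_ ?_
  · exact fun hp => of_decide_eq_true (h3.trans (decide_eq_true hp))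
  · exact fun hp => of_decide_eq_true (h4.trans (decide_eq_true hp))
  · intro t ht
    exact of_decide_eq_true ((congrFun h5 t).symm.trans (decide_eq_true ht))
  · intro t ht
    exact of_decide_eq_true ((congrFun h6 t).symm.trans (decide_eq_true ht))
  · intro t
    exact hgc (Sum.inl t) hij'.le
  · intro t
    exact hgc (Sum.inr t) hij'.le
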